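/- Let P be a poset and M a P-persistence module that is projective of finite rank. Then there is exactly one finitely supported function β : P → ℕ such that M is isomorphic to the direct sum over r ∈ P of β(r) copies of the indicator projective P_r. -/

import Mathlib

/-- A `P`-persistence module: a functor `P → Vec_k`, given explicitly. -/
structure PersMod (P : Type) [PartialOrder P] (k : Type) [Field k] : Type 1 where
  obj : P → Type
  [acg : ∀ r, AddCommGroup (obj r)]
  [mod : ∀ r, Module k (obj r)]
  map : ∀ {r s : P}, r ≤ s → (obj r →ₗ[k] obj s)
  map_refl : ∀ (r : P) (x : obj r), map (le_refl r) x = x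
  map_trans : ∀ {r s t : P} (h1 : r ≤ s) (h2 : s ≤ t) (x : obj r),
    map h2 (map h1 x) = map (le_trans h1 h2) x

attribute [instance] PersMod.acg PersMod.mod

variable {P : Type} [PartialOrder P]

/-- A morphism of persistence modules: a natural transformation. -/
structure PersHom (k : Type) [Field k] (M N : PersMod P k) where
  app : ∀ r : P, M.obj r →ₗ[k] N.obj r
  nat : ∀ {r s : P} (h : r ≤ s) (x : M.obj r),
    app s (M.map h x) = N.map h (app r x)

/-- The finite direct sum of indicator projectives `⊕_{i ∈ I} P_{f i}`:
at grade `r` it is the free vector space on `{i // f i ≤ r}`, with structure maps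
induced by the inclusions of index sets.  For `I = Unit` this is the indicator
projective `P_{f ()}` itself. -/
noncomputable def freePers (k : Type) [Field k] (I : Type) (f : I → P) : PersMod P k where
  obj r := {i : I // f i ≤ r} →₀ k
  map h := Finsupp.lmapDomain k k fun i => ⟨i.1, le_trans i.2 h⟩
  map_refl r x := by
    rw [Finsupp.lmapDomain_apply,
      show (fun i : {i : I // f i ≤ r} => (⟨i.1, le_trans i.2 (le_refl r)⟩ :
        {i : I // f i ≤ r})) = id from rfl, Finsupp.mapDomain_id]
  map_trans h1 h2 x := by
    rw [Finsupp.lmapDomain_apply, Finsupp.lmapDomain_apply, Finsupp.lmapDomain_apply,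
      ← Finsupp.mapDomain_comp]
    rfl

/-- A morphism of persistence modules is surjective if it is so at every grade. -/
def PersHom.Surj {k : Type} [Field k] {M N : PersMod P k} (g : PersHom k M N) : Prop :=
  ∀ r : P, Function.Surjective (g.app r)

/-- Isomorphism of persistence modules: a family of linear equivalences commuting
with the structure maps. -/
def PersIso (k : Type) [Field k] (M N : PersMod P k) : Prop :=
  ∃ ε : ∀ r : P, M.obj r ≃ₗ[k] N.obj r,
    ∀ {r s : P} (h : r ≤ s) (x : M.obj r), ε s (M.map h x) = N.map h (ε r x)

/-- Index type for `⊕_{r ∈ P} P_r^{β r}`, for a finitely supported `β : P →₀ ℕ`. -/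
def bettiIndex (β : P →₀ ℕ) : Type := Σ p : β.support, Fin (β p.1)

instance (β : P →₀ ℕ) : Fintype (bettiIndex β) := by unfold bettiIndex; infer_instance

/-- `β` is a Betti table for `M` if `M ≅ ⊕_{r ∈ P} P_r^{β r}`. -/
def IsBettiTable (k : Type) [Field k] (M : PersMod P k) (β : P →₀ ℕ) : Prop :=
  PersIso k M (freePers k (bettiIndex β) fun x => x.1.1)

-- auxiliary development

open Module

attribute [local instance] Classical.propDecidable

lemma persIso_trans {k : Type} [Field k] {M N O : PersMod P k}
    (h1 : PersIso k M N) (h2 : PersIso k N O) : PersIso k M O := by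
  obtain ⟨ε, hε⟩ := h1; obtain ⟨δ, hδ⟩ := h2
  exact ⟨fun r => (ε r).trans (δ r), fun {r s} h x => by
    simp [LinearEquiv.trans_apply, hε h, hδ h]⟩

lemma freePers_iso (k : Type) [Field k] {I J : Type} (e : I ≃ J) (f : I → P) (g : J → P)
    (hfg : ∀ i, g (e i) = f i) : PersIso k (freePers k I f) (freePers k J g) := by
  refine ⟨fun r => Finsupp.domLCongr (e.subtypeEquiv fun i => by rw [hfg]), fun {r s} h x => ?_⟩
  show Finsupp.domLCongr _ (Finsupp.lmapDomain k k _ x) =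
    Finsupp.lmapDomain k k _ (Finsupp.domLCongr _ x)
  simp only [Finsupp.domLCongr_apply, Finsupp.domCongr_apply, Finsupp.equivMapDomain_eq_mapDomain,
    Finsupp.lmapDomain_apply, ← Finsupp.mapDomain_comp]
  refine (Finsupp.mapDomain_comp.symm.trans ?_).trans
    (congrArg _ (Finsupp.equivMapDomain_eq_mapDomain _ _).symm)
  have hc := Finsupp.mapDomain_comp (v := (x : {i : I // f i ≤ r} →₀ k))
    (f := ⇑(e.subtypeEquiv (p := fun i => f i ≤ r) (q := fun j => g j ≤ r) fun i => by rw [hfg]))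
    (g := fun j : {j : J // g j ≤ r} => (⟨j.1, le_trans j.2 h⟩ : {j : J // g j ≤ s}))
  exact (Finsupp.mapDomain_congr fun i _ => rfl).trans hc

noncomputable def subBelow (k : Type) [Field k] (N : PersMod P k) (p : P) :
    Submodule k (N.obj p) :=
  ⨆ q : {q : P // q < p}, LinearMap.range (N.map q.2.le)

noncomputable def betaOf (k : Type) [Field k] (N : PersMod P k) (p : P) : ℕ :=
  finrank k (N.obj p) - finrank k (subBelow k N p)

lemma betaOf_iso {k : Type} [Field k] {M N : PersMod P k} (h : PersIso k M N) (p : P) :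
    betaOf k M p = betaOf k N p := by
  obtain ⟨ε, hε⟩ := h
  have h1 : finrank k (M.obj p) = finrank k (N.obj p) := (ε p).finrank_eq
  have h2 : Submodule.map (ε p).toLinearMap (subBelow k M p) = subBelow k N p := by
    rw [subBelow, Submodule.map_iSup]
    refine iSup_congr fun q => ?_
    have hc : (ε p).toLinearMap ∘ₗ M.map q.2.le = N.map q.2.le ∘ₗ (ε q.1).toLinearMap := by
      ext x; exact hε q.2.le x
    rw [← LinearMap.range_comp, hc, LinearMap.range_comp, LinearEquiv.range, Submodule.map_top]
  have h3 : finrank k (subBelow k M p) = finrank k (subBelow k N p) := by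
    rw [← h2]; exact ((ε p).submoduleMap (subBelow k M p)).finrank_eq
  rw [betaOf, betaOf, h1, h3]

lemma subBelow_freePers (k : Type) [Field k] (I : Type) (f : I → P) (p : P) :
    subBelow k (freePers k I f) p =
      LinearMap.range (Finsupp.lmapDomain k k
        (fun i : {i : I // f i < p} => (⟨i.1, i.2.le⟩ : {i : I // f i ≤ p}))) := by
  apply le_antisymm
  · refine iSup_le fun q => ?_
    rintro _ ⟨x, rfl⟩
    refine ⟨Finsupp.lmapDomain k k
      (fun i : {i : I // f i ≤ q.1} => (⟨i.1, lt_of_le_of_lt i.2 q.2⟩ : {i : I // f i < p})) x, ?_⟩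
    show Finsupp.mapDomain _ (Finsupp.mapDomain _ x) = Finsupp.mapDomain _ x
    exact Finsupp.mapDomain_comp.symm
  · rintro _ ⟨x, rfl⟩
    induction x using Finsupp.induction_linear with
    | zero => rw [map_zero]; exact Submodule.zero_mem _
    | add a b ha hb => rw [map_add]; exact Submodule.add_mem _ ha hb
    | single a b =>
      have hmem : Finsupp.lmapDomain k k
          (fun i : {i : I // f i < p} => (⟨i.1, i.2.le⟩ : {i : I // f i ≤ p}))
          (Finsupp.single a b) ∈
          LinearMap.range ((freePers k I f).map (a.2.le)) := by
        refine ⟨Finsupp.single ⟨a.1, le_refl _⟩ b, ?_⟩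
        show Finsupp.mapDomain _ (Finsupp.single _ b) = Finsupp.mapDomain _ (Finsupp.single a b)
        rw [Finsupp.mapDomain_single, Finsupp.mapDomain_single]
      exact le_iSup (fun q : {q : P // q < p} =>
        LinearMap.range ((freePers k I f).map q.2.le)) ⟨f a.1, a.2⟩ hmem

noncomputable def splitEquiv {I : Type} (f : I → P) (p : P) :
    {i : I // f i ≤ p} ≃ {i : I // f i < p} ⊕ {i : I // f i = p} where
  toFun i := if h : f i.1 = p then Sum.inr ⟨i.1, h⟩ else Sum.inl ⟨i.1, lt_of_le_of_ne i.2 h⟩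
  invFun := Sum.elim (fun i => ⟨i.1, i.2.le⟩) (fun i => ⟨i.1, i.2.le⟩)
  left_inv i := by by_cases h : f i.1 = p <;> simp [h]
  right_inv x := by
    cases x with
    | inl i => simp [i.2.ne]
    | inr i => simp [i.2]

lemma betaOf_freePers (k : Type) [Field k] (I : Type) [Fintype I] (f : I → P) (p : P) :
    betaOf k (freePers k I f) p = Fintype.card {i : I // f i = p} := by
  have h1 : finrank k ((freePers k I f).obj p) = Fintype.card {i : I // f i ≤ p} :=
    Module.finrank_finsupp_self k
  have hinj : Function.Injective
      (fun i : {i : I // f i < p} => (⟨i.1, i.2.le⟩ : {i : I // f i ≤ p})) := by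
    intro a b hab; cases a; cases b; simpa using hab
  have hinj' : Function.Injective ⇑(Finsupp.lmapDomain k k
      (fun i : {i : I // f i < p} => (⟨i.1, i.2.le⟩ : {i : I // f i ≤ p}))) :=
    fun a b hab => Finsupp.mapDomain_injective hinj
      (by simpa [Finsupp.lmapDomain_apply] using hab)
  have h2 : finrank k (subBelow k (freePers k I f) p) = Fintype.card {i : I // f i < p} := by
    rw [subBelow_freePers]
    exact (LinearMap.finrank_range_of_inj hinj').trans (Module.finrank_finsupp_self k)
  have h3 : Fintype.card {i : I // f i ≤ p} =
      Fintype.card {i : I // f i < p} + Fintype.card {i : I // f i = p} := by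
    rw [Fintype.card_congr (splitEquiv f p), Fintype.card_sum]
  rw [betaOf, h1, h2, h3]
  omega

def sigmaRestrict (β : P →₀ ℕ) : (Σ p : P, Fin (β p)) ≃ bettiIndex β where
  toFun x := ⟨⟨x.1, Finsupp.mem_support_iff.2 x.2.pos.ne'⟩, x.2⟩
  invFun y := ⟨y.1.1, y.2⟩
  left_inv _ := rfl
  right_inv _ := rfl

def fiberEquiv (β : P →₀ ℕ) (p : P) : {x : Σ q : P, Fin (β q) // x.1 = p} ≃ Fin (β p) where
  toFun x := Fin.cast (by rw [x.2]) x.1.2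
  invFun y := ⟨⟨p, y⟩, rfl⟩
  left_inv := by rintro ⟨⟨q, v⟩, rfl⟩; rfl
  right_inv y := rfl

lemma card_bettiIndex_fiber (β : P →₀ ℕ) (p : P) :
    Fintype.card {i : bettiIndex β // i.1.1 = p} = β p := by
  have e : {i : bettiIndex β // i.1.1 = p} ≃ Fin (β p) :=
    (((sigmaRestrict β).subtypeEquiv fun x => Iff.rfl).symm).trans (fiberEquiv β p)
  rw [Fintype.card_congr e, Fintype.card_fin]

noncomputable def betaFun (I : Type) [Fintype I] (f : I → P) : P →₀ ℕ :=
  Finsupp.ofSupportFinite (fun p => Fintype.card {i : I // f i = p}) (by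
    apply Set.Finite.subset (Set.finite_range f)
    intro p hp
    rw [Function.mem_support] at hp
    obtain ⟨i, hi⟩ := Fintype.card_pos_iff.mp (Nat.pos_of_ne_zero hp)
    exact ⟨i, hi⟩)

lemma betaFun_apply (I : Type) [Fintype I] (f : I → P) (p : P) :
    betaFun I f p = Fintype.card {i : I // f i = p} := rfl

noncomputable def indexEquiv (I : Type) [Fintype I] (f : I → P) : I ≃ bettiIndex (betaFun I f) :=
  ((Equiv.sigmaFiberEquiv f).symm.trans
    (Equiv.sigmaCongrRight fun p => Fintype.equivFinOfCardEq (betaFun_apply I f p).symm)).trans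
    (sigmaRestrict (betaFun I f))

lemma indexEquiv_fst (I : Type) [Fintype I] (f : I → P) (i : I) :
    ((indexEquiv I f i).1.1 : P) = f i := rfl

lemma isBettiTable_betaOf {k : Type} [Field k] (M : PersMod P k) (β : P →₀ ℕ)
    (h : IsBettiTable k M β) (p : P) : betaOf k M p = β p := by
  rw [betaOf_iso h p, betaOf_freePers, card_bettiIndex_fiber]


/-- if `M` is projective of finite rank, there is exactly one finitely
supported function `β : P → ℕ` with `M ≅ ⊕_{r∈P} P_r^{β r}`. -/
theorem betti_table_unique (k : Type) [Field k] (M : PersMod P k)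
    (hM : ∃ (I : Type) (_ : Fintype I) (f : I → P), PersIso k M (freePers k I f)) :
    ∃! β : P →₀ ℕ, IsBettiTable k M β := by
  obtain ⟨I, hI, f, hiso⟩ := hM
  have hbt : IsBettiTable k M (betaFun I f) :=
    persIso_trans hiso (freePers_iso k (indexEquiv I f) f _ fun i => rfl)
  refine ⟨betaFun I f, hbt, fun β' hβ' => ?_⟩
  ext p
  rw [← isBettiTable_betaOf M β' hβ' p, isBettiTable_betaOf M (betaFun I f) hbt p]
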